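/- Let $y \mid u \sim N_n(X\beta, \sigma^2 I_n + u\tau^2 \mathbf{1}\mathbf{1}^\top)$ with $P(u=1) = p = 1 - P(u=0)$. Then the posterior probability $P(u=1 \mid y)$ equals $p\left\{p + (1-p)\sqrt{\frac{\sigma^2+n\tau^2}{\sigma^2}}\exp\left(-\frac{n^2\tau^2}{2\sigma^2(\sigma^2+n\tau^2)}(\bar{y}-\bar{x}^\top\beta)^2\right)\right\}^{-1}$, where $\bar{y}$ and $\bar{x}$ are the sample means of the responses and covariate vectors. -/

import Mathlib

open Matrix

theorem stmt12 (n q : ℕ) (hn : 1 ≤ n) (σ2 τ2 p : ℝ) (hσ : 0 < σ2) (hτ : 0 < τ2)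
    (hp : p ∈ Set.Ioo (0 : ℝ) 1)
    (X : Matrix (Fin n) (Fin q) ℝ) (β : Fin q → ℝ) (y : Fin n → ℝ) :
    let J : Matrix (Fin n) (Fin n) ℝ := Matrix.of fun _ _ => 1
    let S0 : Matrix (Fin n) (Fin n) ℝ := σ2 • (1 : Matrix (Fin n) (Fin n) ℝ)
    let S1 : Matrix (Fin n) (Fin n) ℝ := σ2 • (1 : Matrix (Fin n) (Fin n) ℝ) + τ2 • J
    -- multivariate normal density of `N_n(Xβ, S)` evaluated at `y`
    let g : Matrix (Fin n) (Fin n) ℝ → ℝ := fun S =>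
      (2 * Real.pi) ^ (-(n : ℝ) / 2) * S.det ^ (-(1 : ℝ) / 2) *
        Real.exp (-((y - X.mulVec β) ⬝ᵥ S⁻¹.mulVec (y - X.mulVec β)) / 2)
    -- the residual of sample means `ȳ - x̄ᵀβ`
    let d : ℝ := (∑ i, (y i - X.mulVec β i)) / n
    p * g S1 / (p * g S1 + (1 - p) * g S0)
      = p / (p + (1 - p) * Real.sqrt ((σ2 + n * τ2) / σ2) *
          Real.exp (-(n ^ 2 * τ2 / (2 * σ2 * (σ2 + n * τ2))) * d ^ 2)) := by
  intro J S0 S1 g d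
  obtain ⟨hp0, hp1⟩ := hp
  have hnR : (0:ℝ) < n := by exact_mod_cast hn
  have hnne : (n:ℝ) ≠ 0 := hnR.ne'
  have hσn : (0:ℝ) < σ2 + n * τ2 := by positivity
  set r : Fin n → ℝ := y - X.mulVec β with hrdef
  set s : ℝ := ∑ i, r i with hsdef
  set Q : ℝ := r ⬝ᵥ r with hQdef
  have hd : d = s / n := by
    simp only [d, hsdef, hrdef, Pi.sub_apply]
  -- determinants
  have hdet0 : S0.det = σ2 ^ n := by
    simp [S0, Matrix.det_smul]
  have hdet1 : S1.det = σ2 ^ n * (1 + n * (τ2 / σ2)) := by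
    have h : S1 = σ2 • (1 + (Matrix.replicateCol Unit (fun _ => τ2 / σ2) : Matrix (Fin n) Unit ℝ) *
        Matrix.replicateRow Unit (fun _ => (1:ℝ))) := by
      ext i j
      by_cases hij : i = j <;>
        simp [S1, J, hij, Matrix.mul_apply, Matrix.one_apply, mul_add] <;>
        field_simp
    rw [h, Matrix.det_smul, Matrix.det_one_add_replicateCol_mul_replicateRow]
    simp [dotProduct, mul_comm]
  have hE1 : (0:ℝ) < σ2 ^ n * (1 + n * (τ2 / σ2)) := by positivity
  -- inverse of S0
  have hinv0 : S0⁻¹ = σ2⁻¹ • (1 : Matrix (Fin n) (Fin n) ℝ) := by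
    apply Matrix.inv_eq_right_inv
    rw [Matrix.smul_mul, Matrix.mul_smul, Matrix.one_mul, smul_smul,
      mul_inv_cancel₀ hσ.ne', one_smul]
  have hq0 : r ⬝ᵥ S0⁻¹.mulVec r = Q / σ2 := by
    rw [hinv0]
    simp [Matrix.mulVec, dotProduct, Matrix.one_apply, Finset.mul_sum, hQdef,
      div_eq_inv_mul, Finset.sum_mul, mul_comm, mul_left_comm]
  -- inverse of S1 applied to r
  set b : ℝ := -(τ2 / (σ2 * (σ2 + n * τ2))) with hbdef
  set v : Fin n → ℝ := fun i => r i / σ2 + b * s with hvdef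
  have hSv : S1.mulVec v = r := by
    funext i
    have hsum : ∑ j, v j = s / σ2 + n * (b * s) := by
      simp [hvdef, Finset.sum_add_distrib, ← Finset.sum_div, Finset.mul_sum, hsdef]
    have : S1.mulVec v i = σ2 * v i + τ2 * (∑ j, v j) := by
      simp [S1, J, Matrix.mulVec, dotProduct, Matrix.one_apply, add_mul,
        Finset.sum_add_distrib, ite_mul, mul_assoc, Finset.mul_sum]
    rw [this, hsum]
    simp only [hvdef, hbdef]
    field_simp
    ring
  have hdet1ne : IsUnit S1.det := by
    rw [hdet1]; exact isUnit_iff_ne_zero.mpr hE1.ne'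
  have hv : S1⁻¹.mulVec r = v := by
    rw [← hSv, Matrix.mulVec_mulVec, Matrix.nonsing_inv_mul _ hdet1ne, Matrix.one_mulVec]
  have hq1 : r ⬝ᵥ S1⁻¹.mulVec r = Q / σ2 + b * s ^ 2 := by
    rw [hv]
    simp [hvdef, dotProduct, mul_add, Finset.sum_add_distrib, hQdef,
      ← Finset.sum_div, mul_div_assoc, ← Finset.sum_mul, hsdef]
    congr 1
    rw [Finset.sum_div]
    · exact Finset.sum_congr rfl fun i _ => by ring
    · ring
  -- rpow to sqrt
  have hrpow : ∀ x : ℝ, 0 < x → x ^ (-(1:ℝ)/2) = (Real.sqrt x)⁻¹ := by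
    intro x hx
    rw [Real.sqrt_eq_rpow, ← Real.rpow_neg hx.le]
    norm_num
  -- the key ratio
  set K : ℝ := Real.sqrt ((σ2 + n * τ2) / σ2) *
      Real.exp (-(n ^ 2 * τ2 / (2 * σ2 * (σ2 + n * τ2))) * d ^ 2) with hKdef
  have hK : 0 < K := by
    apply mul_pos _ (Real.exp_pos _)
    exact Real.sqrt_pos.mpr (by positivity)
  have hg0 : g S0 = K * g S1 := by
    simp only [g, hdet0, hdet1, hq0, hq1, hKdef]
    rw [hrpow _ (by positivity), hrpow _ hE1]
    have hsq : Real.sqrt (σ2 ^ n * (1 + n * (τ2 / σ2)))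
        = Real.sqrt (σ2 ^ n) * Real.sqrt ((σ2 + n * τ2) / σ2) := by
      rw [← Real.sqrt_mul (by positivity)]
      congr 1
      field_simp
    have hexp : Real.exp (-(n ^ 2 * τ2 / (2 * σ2 * (σ2 + n * τ2))) * d ^ 2) *
        Real.exp (-(Q / σ2 + b * s ^ 2) / 2) = Real.exp (-(Q / σ2) / 2) := by
      rw [← Real.exp_add]
      congr 1
      rw [hd, hbdef]
      field_simp
      ring
    rw [hsq]
    have hs2 : Real.sqrt ((σ2 + n * τ2) / σ2) ≠ 0 := by
      refine (Real.sqrt_pos.mpr (by positivity)).ne'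
    have hsn : Real.sqrt (σ2 ^ n) ≠ 0 := by
      refine (Real.sqrt_pos.mpr (by positivity)).ne'
    rw [← hrdef, hq0, hq1]
    rw [← hexp]
    field_simp
  have hg1 : 0 < g S1 := by
    simp only [g]
    apply mul_pos (mul_pos _ _) (Real.exp_pos _)
    · exact Real.rpow_pos_of_pos (by positivity) _
    · rw [hdet1]; exact Real.rpow_pos_of_pos hE1 _
  -- finish
  have hden : p + (1 - p) * K > 0 := by
    have : 0 < (1 - p) * K := mul_pos (by linarith) hK
    linarith
  rw [hg0]
  rw [show p * g S1 + (1 - p) * (K * g S1) = (p + (1 - p) * K) * g S1 by ring]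
  rw [show p + (1 - p) * Real.sqrt ((σ2 + ↑n * τ2) / σ2) *
      Real.exp (-(↑n ^ 2 * τ2 / (2 * σ2 * (σ2 + ↑n * τ2))) * d ^ 2)
      = p + (1 - p) * K by rw [hKdef]; ring]
  rw [mul_comm p (g S1), mul_comm (p + (1 - p) * K) (g S1),
    mul_div_mul_left _ _ hg1.ne']
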